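/- Let $h$ be a Gamma random variable with shape $N$ (a positive integer) and rate $N$ (mean $1$). Then for every $x \geq 0$: $\Pr(h < x) \geq \left(1 - e^{-a N x}\right)^N$ where $a = (N!)^{-1/N}$, with equality as $x \to 0$ and $x \to \infty$ in the limiting sense; in particular the function $x \mapsto (1 - e^{-aNx})^N$ is a lower bound for the CDF of $h$. -/

import Mathlib

open MeasureTheory ProbabilityTheory Real

namespace AlzerAux

open Set Filter Topology

/-- The constant `c = (N!)^{-1/N} * N`. -/
noncomputable def cc (N : ℕ) : ℝ := (N.factorial : ℝ) ^ (-(1 : ℝ) / (N : ℝ)) * N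

/-- The constant `δ = (N - c)/(N - 1)` (junk value `0` when `N = 1`). -/
noncomputable def dlt (N : ℕ) : ℝ := ((N : ℝ) - cc N) / ((N : ℝ) - 1)

/-- Derivative of `y ↦ (1 - exp (-(c y)))^N`. -/
noncomputable def vd (N : ℕ) (t : ℝ) : ℝ :=
  (N : ℝ) * (1 - Real.exp (-(cc N * t))) ^ (N - 1) * (cc N * Real.exp (-(cc N * t)))

noncomputable def phi (N : ℕ) (t : ℝ) : ℝ :=
  Real.log (cc N * t) - dlt N * t - Real.log (1 - Real.exp (-(cc N * t)))

noncomputable def Phi (N : ℕ) (t : ℝ) : ℝ := if t = 0 then 0 else phi N t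

noncomputable def phifirst (N : ℕ) (t : ℝ) : ℝ :=
  t⁻¹ - dlt N - cc N * Real.exp (-(cc N * t)) / (1 - Real.exp (-(cc N * t)))

noncomputable def phisecond (N : ℕ) (t : ℝ) : ℝ :=
  -(t⁻¹) ^ 2 + (cc N) ^ 2 * Real.exp (-(cc N * t)) / (1 - Real.exp (-(cc N * t))) ^ 2

variable {N : ℕ}

lemma cc_pos (hN : 0 < N) : 0 < cc N := by
  have h1 : (0 : ℝ) < N.factorial := by exact_mod_cast N.factorial_pos
  have h2 : (0 : ℝ) < N := by exact_mod_cast hN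
  exact mul_pos (Real.rpow_pos_of_pos h1 _) h2

lemma one_sub_exp_pos (hN : 0 < N) {t : ℝ} (ht : 0 < t) :
    0 < 1 - Real.exp (-(cc N * t)) := by
  have : -(cc N * t) < 0 := by nlinarith [cc_pos hN, mul_pos (cc_pos hN) ht]
  have := Real.exp_lt_one_iff.mpr this
  linarith

lemma one_sub_exp_nonneg (hN : 0 < N) {t : ℝ} (ht : 0 ≤ t) :
    0 ≤ 1 - Real.exp (-(cc N * t)) := by
  have h : -(cc N * t) ≤ 0 := by nlinarith [cc_pos hN]
  have := Real.exp_le_one_iff.mpr h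
  linarith

lemma cc_one : cc 1 = 1 := by
  simp [cc]

lemma dlt_id (hN : 0 < N) : ((N : ℝ) - 1) * dlt N = (N : ℝ) - cc N := by
  rcases eq_or_ne N 1 with rfl | hne
  · simp [cc_one, dlt]
  · have h1 : (1 : ℕ) < N := lt_of_le_of_ne hN (Ne.symm hne)
    have : ((N : ℝ) - 1) ≠ 0 := by
      have : (1 : ℝ) < N := by exact_mod_cast h1
      linarith
    rw [dlt]
    field_simp

lemma cc_pow (hN : 0 < N) : cc N ^ N = (N : ℝ) ^ N / N.factorial := by
  have hfact : (0 : ℝ) < N.factorial := by exact_mod_cast N.factorial_pos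
  have hNne : (N : ℝ) ≠ 0 := by exact_mod_cast hN.ne'
  have key : ((N.factorial : ℝ) ^ (-(1 : ℝ) / (N : ℝ))) ^ N = (N.factorial : ℝ)⁻¹ := by
    rw [← Real.rpow_natCast ((N.factorial : ℝ) ^ (-(1 : ℝ) / (N : ℝ))) N,
      ← Real.rpow_mul hfact.le]
    rw [show (-(1 : ℝ) / (N : ℝ)) * N = -1 by field_simp]
    rw [Real.rpow_neg_one]
  rw [cc, mul_pow, key]
  ring

lemma gamma_pdf_eq (hN : 0 < N) {t : ℝ} (ht : 0 ≤ t) :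
    gammaPDFReal N N t =
      (N : ℝ) ^ N / (N - 1).factorial * t ^ (N - 1) * Real.exp (-((N : ℝ) * t)) := by
  rw [gammaPDFReal, if_pos ht]
  have h1 : ((N : ℝ)) ^ ((N : ℝ)) = (N : ℝ) ^ N := Real.rpow_natCast _ _
  have h2 : Real.Gamma (N : ℝ) = (N - 1).factorial := by
    rw [show ((N : ℝ)) = (((N - 1) + 1 : ℕ) : ℝ) by
      rw [Nat.sub_add_cancel hN]]
    exact_mod_cast Real.Gamma_nat_eq_factorial (N - 1)
  have h3 : t ^ ((N : ℝ) - 1) = t ^ (N - 1) := by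
    rw [show ((N : ℝ) - 1) = (((N - 1 : ℕ)) : ℝ) by
      push_cast [Nat.cast_sub hN]
      ring]
    exact Real.rpow_natCast _ _
  rw [h1, h2, h3]

lemma pdf_eq_vd_mul (hN : 0 < N) {t : ℝ} (ht : 0 < t) :
    gammaPDFReal N N t = vd N t * Real.exp (phi N t) ^ (N - 1) := by
  have hc := cc_pos hN
  have hct : 0 < cc N * t := mul_pos hc ht
  have hse := one_sub_exp_pos hN ht
  have hexp : Real.exp (phi N t) =
      cc N * t * Real.exp (-(dlt N * t)) / (1 - Real.exp (-(cc N * t))) := by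
    rw [phi, sub_sub, Real.exp_sub, Real.exp_add, Real.exp_log hct, Real.exp_log hse,
      Real.exp_neg (dlt N * t)]
    rw [div_eq_div_iff (by positivity) hse.ne']
    field_simp
  rw [hexp]
  have hpow : (cc N * t * Real.exp (-(dlt N * t)) / (1 - Real.exp (-(cc N * t)))) ^ (N - 1)
      = (cc N) ^ (N - 1) * t ^ (N - 1) * Real.exp (-(((N : ℝ) - cc N) * t))
        / (1 - Real.exp (-(cc N * t))) ^ (N - 1) := by
    rw [div_pow, mul_pow, mul_pow, ← Real.exp_nat_mul]
    congr 3
    have : ((N - 1 : ℕ) : ℝ) = (N : ℝ) - 1 := by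
      push_cast [Nat.cast_sub hN]; ring
    rw [this]
    rw [show ((N : ℝ) - 1) * -(dlt N * t) = -((((N : ℝ) - 1) * dlt N) * t) by ring, dlt_id hN]
  rw [hpow, gamma_pdf_eq hN ht.le]
  have hNfact : ((N).factorial : ℝ) = (N : ℝ) * ((N - 1).factorial : ℝ) := by
    rw [← Nat.mul_factorial_pred hN.ne']
    push_cast
    ring
  have hccN : (N : ℝ) * cc N ^ N = (N : ℝ) ^ N / (N - 1).factorial := by
    rw [cc_pow hN, hNfact]
    have hfpos : (0 : ℝ) < ((N - 1).factorial : ℝ) := by exact_mod_cast (N - 1).factorial_pos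
    have hNpos : (0 : ℝ) < N := by exact_mod_cast hN
    field_simp
  have hccsplit : cc N * cc N ^ (N - 1) = cc N ^ N := by
    rw [← pow_succ']
    congr 1
    omega
  have hexps : Real.exp (-(cc N * t)) * Real.exp (-(((N : ℝ) - cc N) * t))
      = Real.exp (-((N : ℝ) * t)) := by
    rw [← Real.exp_add]; ring_nf
  rw [vd]
  have hsepow : (0 : ℝ) < (1 - Real.exp (-(cc N * t))) ^ (N - 1) := pow_pos hse _
  rw [← hccN, ← hccsplit, ← hexps]
  field_simp

lemma hasDerivAt_inner (N : ℕ) (t : ℝ) :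
    HasDerivAt (fun y : ℝ => 1 - Real.exp (-(cc N * y)))
      (cc N * Real.exp (-(cc N * t))) t := by
  have h1 : HasDerivAt (fun y : ℝ => -(cc N * y)) (-(cc N)) t := by
    simpa using ((hasDerivAt_id t).const_mul (cc N)).fun_neg
  have h2 := h1.exp
  have h3 := h2.const_sub 1
  refine h3.congr_deriv ?_
  ring

lemma hasDerivAt_v (N : ℕ) (t : ℝ) :
    HasDerivAt (fun y : ℝ => (1 - Real.exp (-(cc N * y))) ^ N) (vd N t) t := by
  simpa [vd, mul_comm, mul_assoc, mul_left_comm] using (hasDerivAt_inner N t).fun_pow N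

lemma vd_nonneg (hN : 0 < N) {t : ℝ} (ht : 0 ≤ t) : 0 ≤ vd N t := by
  have h1 := one_sub_exp_nonneg hN ht
  have hc := cc_pos hN
  have h2 : (0:ℝ) ≤ (1 - Real.exp (-(cc N * t))) ^ (N - 1) := pow_nonneg h1 _
  have h3 : (0:ℝ) ≤ (N : ℝ) := Nat.cast_nonneg N
  exact mul_nonneg (mul_nonneg h3 h2) (mul_nonneg hc.le (Real.exp_pos _).le)

lemma Phi_zero (N : ℕ) : Phi N 0 = 0 := if_pos rfl

lemma eventuallyEq_Phi {t : ℝ} (ht : 0 < t) : Phi N =ᶠ[nhds t] phi N :=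
  Filter.eventually_of_mem (Ioi_mem_nhds ht) (fun s hs => if_neg (ne_of_gt hs))

lemma hasDerivAt_phi (hN : 0 < N) {t : ℝ} (ht : 0 < t) :
    HasDerivAt (phi N) (phifirst N t) t := by
  have hc := cc_pos hN
  have hct : 0 < cc N * t := mul_pos hc ht
  have hse := one_sub_exp_pos hN ht
  have h1 : HasDerivAt (fun y : ℝ => Real.log (cc N * y)) (cc N / (cc N * t)) t := by
    have h : HasDerivAt (fun y : ℝ => cc N * y) (cc N) t := by
      simpa using (hasDerivAt_id t).const_mul (cc N)
    exact h.log hct.ne'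
  have h2 : HasDerivAt (fun y : ℝ => dlt N * y) (dlt N) t := by
    simpa using (hasDerivAt_id t).const_mul (dlt N)
  have h3 : HasDerivAt (fun y : ℝ => Real.log (1 - Real.exp (-(cc N * y))))
      (cc N * Real.exp (-(cc N * t)) / (1 - Real.exp (-(cc N * t)))) t :=
    (hasDerivAt_inner N t).log hse.ne'
  have H := (h1.sub h2).sub h3
  have hval : phifirst N t = cc N / (cc N * t) - dlt N
      - cc N * Real.exp (-(cc N * t)) / (1 - Real.exp (-(cc N * t))) := by
    rw [phifirst, div_mul_eq_div_div, div_self hc.ne', one_div]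
  rw [hval]
  exact H

lemma hasDerivAt_phifirst (hN : 0 < N) {t : ℝ} (ht : 0 < t) :
    HasDerivAt (phifirst N) (phisecond N t) t := by
  have hc := cc_pos hN
  have hse := one_sub_exp_pos hN ht
  have h1 : HasDerivAt (fun y : ℝ => y⁻¹) (-(t ^ 2)⁻¹) t := hasDerivAt_inv ht.ne'
  have hexp' : HasDerivAt (fun y : ℝ => Real.exp (-(cc N * y)))
      (Real.exp (-(cc N * t)) * (-(cc N))) t := by
    have h : HasDerivAt (fun y : ℝ => -(cc N * y)) (-(cc N)) t := by
      simpa using ((hasDerivAt_id t).const_mul (cc N)).fun_neg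
    exact h.exp
  have hf : HasDerivAt (fun y : ℝ => cc N * Real.exp (-(cc N * y)))
      (cc N * (Real.exp (-(cc N * t)) * (-(cc N)))) t := hexp'.const_mul (cc N)
  have hg := hasDerivAt_inner N t
  have hdiv := hf.fun_div hg hse.ne'
  have H := (h1.fun_sub (hasDerivAt_const t (dlt N))).fun_sub hdiv
  refine H.congr_deriv ?_
  rw [phisecond]
  have h2 : (1 - Real.exp (-(cc N * t))) ^ 2 ≠ 0 := by positivity
  field_simp
  ring

lemma phisecond_nonpos (hN : 0 < N) {t : ℝ} (ht : 0 < t) : phisecond N t ≤ 0 := by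
  have hc := cc_pos hN
  have hu : 0 < cc N * t := mul_pos hc ht
  set u := cc N * t with hu'
  have hs : u / 2 ≤ Real.sinh (u / 2) := Real.self_le_sinh_iff.mpr (by positivity)
  have e1 : Real.exp (-(u / 2)) * Real.exp (u / 2) = 1 := by
    rw [← Real.exp_add]; norm_num
  have e2 : Real.exp (-(u / 2)) * Real.exp (-(u / 2)) = Real.exp (-u) := by
    rw [← Real.exp_add]; ring_nf
  have hfact : 1 - Real.exp (-u) = Real.exp (-(u / 2)) * (2 * Real.sinh (u / 2)) := by
    rw [Real.sinh_eq]
    linear_combination e2 - e1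
  have hkey : u * Real.exp (-(u / 2)) ≤ 1 - Real.exp (-u) := by
    rw [hfact]
    have hE := Real.exp_pos (-(u / 2))
    nlinarith [hs]
  have hsq : u ^ 2 * Real.exp (-u) ≤ (1 - Real.exp (-u)) ^ 2 := by
    have h0 : 0 ≤ u * Real.exp (-(u / 2)) := by positivity
    have h2 := mul_self_le_mul_self h0 hkey
    nlinarith [e2]
  have h1E : (0 : ℝ) < (1 - Real.exp (-u)) ^ 2 := by
    have := one_sub_exp_pos hN ht
    rw [← hu'] at this
    positivity
  have hmain : (cc N) ^ 2 * Real.exp (-u) / (1 - Real.exp (-u)) ^ 2 ≤ (t⁻¹) ^ 2 := by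
    rw [div_le_iff₀ h1E]
    have h3 : (cc N) ^ 2 * Real.exp (-u) = (t⁻¹) ^ 2 * (u ^ 2 * Real.exp (-u)) := by
      rw [hu']
      field_simp
    rw [h3]
    have h4 : (0 : ℝ) ≤ (t⁻¹) ^ 2 := by positivity
    exact mul_le_mul_of_nonneg_left hsq h4
  rw [phisecond, ← hu']
  linarith

lemma continuousOn_Phi (hN : 0 < N) : ContinuousOn (Phi N) (Ici 0) := by
  intro t ht
  rcases (show (0:ℝ) ≤ t from ht).eq_or_lt with h0 | hpos
  · subst h0
    rw [← continuousWithinAt_Ioi_iff_Ici]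
    have hPhi0 : Phi N 0 = 0 := Phi_zero N
    unfold ContinuousWithinAt
    rw [hPhi0]
    have hc := cc_pos hN
    have hslope : Filter.Tendsto (fun s => (1 - Real.exp (-(cc N * s))) / s)
        (nhdsWithin (0:ℝ) (Ioi 0)) (nhds (cc N)) := by
      have hd : HasDerivAt (fun y : ℝ => 1 - Real.exp (-(cc N * y))) (cc N) 0 := by
        simpa using hasDerivAt_inner N 0
      rw [hasDerivAt_iff_tendsto_slope] at hd
      have hmono : nhdsWithin (0:ℝ) (Ioi 0) ≤ nhdsWithin (0:ℝ) {(0:ℝ)}ᶜ :=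
        nhdsWithin_mono 0 (fun s hs => ne_of_gt hs)
      refine (hd.mono_left hmono).congr ?_
      intro s
      simp [slope_def_field]
    have hratio : Filter.Tendsto (fun s => (1 - Real.exp (-(cc N * s))) / (cc N * s))
        (nhdsWithin (0:ℝ) (Ioi 0)) (nhds 1) := by
      have h := hslope.div_const (cc N)
      rw [div_self hc.ne'] at h
      refine h.congr (fun s => ?_)
      rw [div_div, mul_comm]
    have hlog : Filter.Tendsto
        (fun s => Real.log ((1 - Real.exp (-(cc N * s))) / (cc N * s)))
        (nhdsWithin (0:ℝ) (Ioi 0)) (nhds 0) := by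
      have hcont : ContinuousAt Real.log 1 := Real.continuousAt_log one_ne_zero
      have h := hcont.tendsto.comp hratio
      simpa [Function.comp_def] using h
    have hlin : Filter.Tendsto (fun s : ℝ => dlt N * s)
        (nhdsWithin (0:ℝ) (Ioi 0)) (nhds 0) := by
      have h : Filter.Tendsto (fun s : ℝ => dlt N * s) (nhds 0) (nhds (dlt N * 0)) :=
        (continuous_const.mul continuous_id).tendsto 0
      rw [mul_zero] at h
      exact h.mono_left nhdsWithin_le_nhds
    have H := hlog.neg.sub hlin
    rw [show -(0:ℝ) - 0 = 0 by ring] at H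
    refine Filter.Tendsto.congr' ?_ H
    filter_upwards [self_mem_nhdsWithin] with s hs
    have hs0 : (0:ℝ) < s := hs
    rw [Phi, if_neg hs0.ne', phi,
      Real.log_div (one_sub_exp_pos hN hs0).ne' (mul_pos hc hs0).ne']
    ring
  · have hca : ContinuousAt (phi N) t := (hasDerivAt_phi hN hpos).continuousAt
    exact (hca.congr (eventuallyEq_Phi hpos).symm).continuousWithinAt

lemma concaveOn_Phi (hN : 0 < N) : ConcaveOn ℝ (Ici 0) (Phi N) := by
  refine concaveOn_of_hasDerivWithinAt2_nonpos (f' := phifirst N) (f'' := phisecond N)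
    (convex_Ici 0) (continuousOn_Phi hN) ?_ ?_ ?_
  · intro x hx
    rw [interior_Ici] at hx
    exact (((hasDerivAt_phi hN hx).congr_of_eventuallyEq
      (eventuallyEq_Phi hx)).hasDerivWithinAt)
  · intro x hx
    rw [interior_Ici] at hx
    exact (hasDerivAt_phifirst hN hx).hasDerivWithinAt
  · intro x hx
    rw [interior_Ici] at hx
    exact phisecond_nonpos hN hx

lemma Phi_anchor (hN : 0 < N) {t x : ℝ} (ht : 0 < t) (htx : t ≤ x) (hx : 0 ≤ Phi N x) :
    0 ≤ Phi N t := by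
  have hx0 : 0 < x := lt_of_lt_of_le ht htx
  have ha : (0:ℝ) ≤ 1 - t / x := by
    have h : t / x ≤ 1 := (div_le_one hx0).mpr htx
    linarith
  have hb : (0:ℝ) ≤ t / x := by positivity
  have hsum : (1 - t / x) + t / x = 1 := by ring
  have H := (concaveOn_Phi hN).2 (self_mem_Ici) (mem_Ici.mpr hx0.le) ha hb hsum
  rw [smul_eq_mul, smul_eq_mul, smul_eq_mul, smul_eq_mul] at H
  have hpt : (1 - t / x) * 0 + t / x * x = t := by field_simp; ring
  rw [hpt, Phi_zero] at H
  have h1 : 0 ≤ t / x * Phi N x := mul_nonneg hb hx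
  nlinarith [H]

lemma integrable_pdf (hN : 0 < N) : Integrable (gammaPDFReal N N) := by
  have hN' : (0:ℝ) < N := by exact_mod_cast hN
  refine ⟨(stronglyMeasurable_gammaPDFReal N N).aestronglyMeasurable, ?_⟩
  rw [hasFiniteIntegral_iff_ofReal
    (Filter.Eventually.of_forall (gammaPDFReal_nonneg hN' hN'))]
  have h1 : (∫⁻ a, ENNReal.ofReal (gammaPDFReal N N a)) = ∫⁻ a, gammaPDF N N a := rfl
  rw [h1, lintegral_gammaPDF_eq_one hN' hN']
  exact ENNReal.one_lt_top

noncomputable def F (N : ℕ) (y : ℝ) : ℝ := ∫ t in (0:ℝ)..y, gammaPDFReal N N t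

lemma continuous_F (hN : 0 < N) : Continuous (F N) :=
  intervalIntegral.continuous_primitive
    (fun _ _ => (integrable_pdf hN).intervalIntegrable) 0

lemma continuousAt_pdf (hN : 0 < N) {t : ℝ} (ht : 0 < t) :
    ContinuousAt (gammaPDFReal N N) t := by
  have hcont : ContinuousAt
      (fun s : ℝ => (N : ℝ) ^ N / (N - 1).factorial * s ^ (N - 1)
        * Real.exp (-((N : ℝ) * s))) t := by
    apply Continuous.continuousAt
    continuity
  refine hcont.congr ?_
  filter_upwards [Ioi_mem_nhds ht] with s hs
  exact (gamma_pdf_eq hN (le_of_lt hs)).symm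

lemma hasDerivAt_F (hN : 0 < N) {t : ℝ} (ht : 0 < t) :
    HasDerivAt (F N) (gammaPDFReal N N t) t :=
  intervalIntegral.integral_hasDerivAt_right ((integrable_pdf hN).intervalIntegrable)
    ((stronglyMeasurable_gammaPDFReal N N).aestronglyMeasurable.stronglyMeasurableAtFilter)
    (continuousAt_pdf hN ht)

lemma lintegral_Ioi_pdf (hN : 0 < N) :
    ∫⁻ t in Ioi (0:ℝ), ENNReal.ofReal (gammaPDFReal N N t) = 1 := by
  have hN' : (0:ℝ) < N := by exact_mod_cast hN
  have h0 : (∫⁻ t in Ioi (0:ℝ), ENNReal.ofReal (gammaPDFReal N N t))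
      = ∫⁻ t in Ici (0:ℝ), gammaPDF N N t := by
    exact setLIntegral_congr Ioi_ae_eq_Ici
  rw [h0]
  have hsplit := lintegral_add_compl (gammaPDF N N) (measurableSet_Ici (a := (0:ℝ)))
    (μ := volume)
  rw [compl_Ici, lintegral_gammaPDF_of_nonpos (le_refl (0:ℝ)), add_zero] at hsplit
  rw [hsplit, lintegral_gammaPDF_eq_one hN' hN']

lemma integral_Ioi_pdf (hN : 0 < N) :
    ∫ t in Ioi (0:ℝ), gammaPDFReal N N t = 1 := by
  have hN' : (0:ℝ) < N := by exact_mod_cast hN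
  have hint : IntegrableOn (gammaPDFReal N N) (Ioi 0) := (integrable_pdf hN).integrableOn
  have h2 := ofReal_integral_eq_lintegral_ofReal hint
    (Filter.Eventually.of_forall (gammaPDFReal_nonneg hN' hN'))
  rw [lintegral_Ioi_pdf hN] at h2
  have hnn : 0 ≤ ∫ t in Ioi (0:ℝ), gammaPDFReal N N t :=
    integral_nonneg (gammaPDFReal_nonneg hN' hN')
  exact ENNReal.ofReal_eq_one.mp h2

lemma tendsto_F (hN : 0 < N) : Filter.Tendsto (F N) Filter.atTop (nhds 1) := by
  have hint : IntegrableOn (gammaPDFReal N N) (Ioi 0) := (integrable_pdf hN).integrableOn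
  have h := MeasureTheory.intervalIntegral_tendsto_integral_Ioi 0 hint Filter.tendsto_id
  rw [integral_Ioi_pdf hN] at h
  exact h

lemma tendsto_v (hN : 0 < N) :
    Filter.Tendsto (fun y : ℝ => (1 - Real.exp (-(cc N * y))) ^ N)
      Filter.atTop (nhds 1) := by
  have h1 : Filter.Tendsto (fun y : ℝ => -(cc N * y)) Filter.atTop Filter.atBot := by
    have h := (Filter.tendsto_id (α := ℝ)).const_mul_atTop (cc_pos hN)
    exact tendsto_neg_atTop_atBot.comp h
  have h2 := Real.tendsto_exp_atBot.comp h1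
  have h3 : Filter.Tendsto (fun y : ℝ => 1 - Real.exp (-(cc N * y)))
      Filter.atTop (nhds 1) := by
    have := Filter.Tendsto.sub (tendsto_const_nhds (x := (1:ℝ))) h2
    simpa using this
  have h4 := h3.pow N
  simpa using h4

theorem key (hN : 0 < N) {x : ℝ} (hx : 0 ≤ x) :
    (1 - Real.exp (-(cc N * x))) ^ N ≤ F N x := by
  rcases hx.eq_or_lt with h0 | hx0
  · rw [← h0]
    simp [F, intervalIntegral.integral_same, zero_pow hN.ne']
  · set h := fun y => F N y - (1 - Real.exp (-(cc N * y))) ^ N with hh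
    have hconth : Continuous h := by
      apply (continuous_F hN).sub
      apply Continuous.pow
      exact continuous_const.sub (Real.continuous_exp.comp
        ((continuous_const.mul continuous_id).neg))
    suffices hfinal : 0 ≤ h x by
      simp only [hh] at hfinal
      linarith
    by_cases hsign : 0 ≤ Phi N x
    · have hmono : MonotoneOn h (Icc 0 x) := by
        apply monotoneOn_of_deriv_nonneg (convex_Icc 0 x) hconth.continuousOn
        · intro t htI
          rw [interior_Icc] at htI
          exact ((hasDerivAt_F hN htI.1).sub
            (hasDerivAt_v N t)).differentiableAt.differentiableWithinAt
        · intro t htI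
          rw [interior_Icc] at htI
          have hD := (hasDerivAt_F hN htI.1).sub (hasDerivAt_v N t)
          rw [show deriv h t = deriv (F N - fun y => (1 - Real.exp (-(cc N * y))) ^ N) t from rfl, hD.deriv]
          have hPhit : 0 ≤ Phi N t := Phi_anchor hN htI.1 htI.2.le hsign
          rw [Phi, if_neg htI.1.ne'] at hPhit
          have hpdf := pdf_eq_vd_mul hN htI.1
          have hexp1 : (1:ℝ) ≤ Real.exp (phi N t) := by
            rw [← Real.exp_zero]
            exact Real.exp_le_exp.mpr hPhit
          have h1 : (1:ℝ) ≤ Real.exp (phi N t) ^ (N - 1) := by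
            have := pow_le_pow_left₀ (by norm_num : (0:ℝ) ≤ 1) hexp1 (N - 1)
            rwa [one_pow] at this
          have hvd := vd_nonneg hN htI.1.le
          rw [hpdf]
          nlinarith [hvd, h1]
      have hle := hmono (Set.left_mem_Icc.mpr hx0.le)
        (Set.right_mem_Icc.mpr hx0.le) hx0.le
      have hh0 : h 0 = 0 := by
        simp [hh, F, intervalIntegral.integral_same, zero_pow hN.ne']
      linarith
    · push_neg at hsign
      have hanti : AntitoneOn h (Ici x) := by
        apply antitoneOn_of_deriv_nonpos (convex_Ici x) hconth.continuousOn
        · intro t htI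
          rw [interior_Ici] at htI
          have ht0 : 0 < t := lt_trans hx0 htI
          exact ((hasDerivAt_F hN ht0).sub
            (hasDerivAt_v N t)).differentiableAt.differentiableWithinAt
        · intro t htI
          rw [interior_Ici] at htI
          have ht0 : 0 < t := lt_trans hx0 htI
          have hD := (hasDerivAt_F hN ht0).sub (hasDerivAt_v N t)
          rw [show deriv h t = deriv (F N - fun y => (1 - Real.exp (-(cc N * y))) ^ N) t from rfl, hD.deriv]
          have hPhit : Phi N t < 0 := by
            by_contra hcon
            push_neg at hcon
            exact absurd (Phi_anchor hN hx0 htI.le hcon) (not_le.mpr hsign)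
          rw [Phi, if_neg ht0.ne'] at hPhit
          have hpdf := pdf_eq_vd_mul hN ht0
          have hexp1 : Real.exp (phi N t) ≤ 1 := by
            rw [← Real.exp_zero]
            exact Real.exp_le_exp.mpr hPhit.le
          have h1 : Real.exp (phi N t) ^ (N - 1) ≤ 1 := by
            have := pow_le_pow_left₀ (Real.exp_pos _).le hexp1 (N - 1)
            rwa [one_pow] at this
          have hvd := vd_nonneg hN ht0.le
          rw [hpdf]
          nlinarith [hvd, h1]
      have htend : Filter.Tendsto h Filter.atTop (nhds 0) := by
        have := (tendsto_F hN).sub (tendsto_v hN)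
        simpa using this
      refine le_of_tendsto htend ?_
      filter_upwards [Filter.eventually_ge_atTop x] with s hs
      exact hanti (mem_Ici.mpr (le_refl x)) (mem_Ici.mpr hs) hs

end AlzerAux


/-- Alzer-type lower bound on the CDF of the normalized Gamma distribution: for
`h ~ Gamma(N, N)` with `N ≥ 1` an integer and `a = (N!)^{-1/N}`,
`Pr(h < x) ≥ (1 - e^{-aNx})^N` for all `x ≥ 0`. -/
theorem gamma_cdf_lower_bound (N : ℕ) (hN : 0 < N) (x : ℝ) (hx : 0 ≤ x) :
    ENNReal.ofReal
        ((1 - Real.exp (-((N.factorial : ℝ) ^ (-(1 : ℝ) / (N : ℝ)) * (N : ℝ) * x))) ^ N) ≤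
      gammaMeasure (N : ℝ) (N : ℝ) (Set.Iio x) := by
  have hN' : (0:ℝ) < N := by exact_mod_cast hN
  have hkey := AlzerAux.key hN hx
  have hcc : (N.factorial : ℝ) ^ (-(1 : ℝ) / (N : ℝ)) * (N : ℝ) * x = AlzerAux.cc N * x := by
    rw [AlzerAux.cc]
  rw [gammaMeasure, withDensity_apply _ measurableSet_Iio, hcc]
  have hFx : AlzerAux.F N x = ∫ t in Set.Ioo (0:ℝ) x, gammaPDFReal N N t := by
    rw [AlzerAux.F, intervalIntegral.integral_of_le hx,
      MeasureTheory.integral_Ioc_eq_integral_Ioo]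
  have hint : MeasureTheory.IntegrableOn (gammaPDFReal N N) (Set.Ioo 0 x) :=
    (AlzerAux.integrable_pdf hN).integrableOn
  have h2 : ENNReal.ofReal (∫ t in Set.Ioo (0:ℝ) x, gammaPDFReal N N t)
      = ∫⁻ t in Set.Ioo (0:ℝ) x, gammaPDF N N t :=
    MeasureTheory.ofReal_integral_eq_lintegral_ofReal hint
      (Filter.Eventually.of_forall (gammaPDFReal_nonneg hN' hN'))
  calc ENNReal.ofReal ((1 - Real.exp (-(AlzerAux.cc N * x))) ^ N)
      ≤ ENNReal.ofReal (AlzerAux.F N x) := ENNReal.ofReal_le_ofReal hkey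
    _ = ∫⁻ t in Set.Ioo (0:ℝ) x, gammaPDF N N t := by rw [hFx, h2]
    _ ≤ ∫⁻ t in Set.Iio x, gammaPDF N N t :=
        MeasureTheory.lintegral_mono_set Set.Ioo_subset_Iio_self
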